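/- Fix a ∈ (0,1), d ∈ (0,1), and s > 0. Then lim_{n → ∞} (1 - (1 - (1 - s/n)^{d·n})/(d·n))^{a·(1-d)·n} = exp(-(a(1-d)/d)·(1 - exp(-s·d))), and consequently the large-market friends matching rate equals Ψ(s,a) = 1 - exp(-(a(1-d)/d)·(1 - exp(-s·d))). -/

import Mathlib

open Filter Topology

/-- `log(1+t)/t → 1` as `t → 0`, `t ≠ 0`. -/
lemma aux_log_slope :
    Tendsto (fun t : ℝ => Real.log (1 + t) / t) (𝓝[≠] (0 : ℝ)) (𝓝 1) := by
  have h : HasDerivAt (fun t : ℝ => Real.log (1 + t)) 1 0 := by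
    have h0 : HasDerivAt (fun t : ℝ => 1 + t) 1 0 := by
      simpa using (hasDerivAt_id (0 : ℝ)).const_add 1
    have h1 : HasDerivAt Real.log 1⁻¹ ((fun t : ℝ => 1 + t) 0) := by
      simpa using Real.hasDerivAt_log one_ne_zero
    have h3 := h1.comp 0 h0
    simp only [inv_one, mul_one] at h3
    exact h3
  have h2 := hasDerivAt_iff_tendsto_slope.mp h
  refine h2.congr fun t => ?_
  simp [slope_def_field]

/-- If `c n → L` and eventually `c n ≠ 0`, then `(1 + c n / n)^(b·n) → exp(b·L)`. -/
lemma aux_pow_limit (b L : ℝ) (c : ℕ → ℝ) (hc : Tendsto c atTop (𝓝 L))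
    (hne : ∀ᶠ n in atTop, c n ≠ 0) :
    Tendsto (fun n : ℕ => (1 + c n / n) ^ (b * n)) atTop
      (𝓝 (Real.exp (b * L))) := by
  have hn : Tendsto (fun n : ℕ => (n : ℝ)) atTop atTop :=
    tendsto_natCast_atTop_atTop
  have ht0 : Tendsto (fun n : ℕ => c n / n) atTop (𝓝 0) := hc.div_atTop hn
  have htne : ∀ᶠ n : ℕ in atTop, c n / n ≠ 0 := by
    filter_upwards [hne, eventually_gt_atTop 0] with n h1 h2
    exact div_ne_zero h1 (Nat.cast_ne_zero.mpr h2.ne')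
  have ht : Tendsto (fun n : ℕ => c n / n) atTop (𝓝[≠] 0) :=
    tendsto_nhdsWithin_of_tendsto_nhds_of_eventually_within _ ht0 htne
  have hslope : Tendsto (fun n : ℕ => Real.log (1 + c n / n) / (c n / n))
      atTop (𝓝 1) := aux_log_slope.comp ht
  have hmul : Tendsto (fun n : ℕ => b * (n : ℝ) * Real.log (1 + c n / n))
      atTop (𝓝 (b * L)) := by
    have h2 : Tendsto
        (fun n : ℕ => b * c n * (Real.log (1 + c n / n) / (c n / n)))
        atTop (𝓝 (b * L * 1)) := (hc.const_mul b).mul hslope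
    rw [mul_one] at h2
    refine h2.congr' ?_
    filter_upwards [hne, eventually_gt_atTop 0] with n h1 h2n
    have hn0 : (n : ℝ) ≠ 0 := Nat.cast_ne_zero.mpr h2n.ne'
    field_simp
  have hpos : ∀ᶠ n : ℕ in atTop, 0 < 1 + c n / n := by
    have := ht0.eventually (Ioo_mem_nhds (by norm_num : (-1 : ℝ) < 0)
      (by norm_num : (0 : ℝ) < 1))
    filter_upwards [this] with n hn'
    have := hn'.1
    linarith
  have := (Real.continuous_exp.tendsto (b * L)).comp hmul
  refine this.congr' ?_
  filter_upwards [hpos] with n hp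
  simp only [Function.comp]
  rw [Real.rpow_def_of_pos hp, mul_comm]

theorem psi_large_market_limit (a d s : ℝ)
    (ha : a ∈ Set.Ioo (0 : ℝ) 1) (hd : d ∈ Set.Ioo (0 : ℝ) 1) (hs : 0 < s) :
    Tendsto
      (fun n : ℕ =>
        (1 - (1 - (1 - s / n) ^ (d * n)) / (d * n)) ^ (a * (1 - d) * n))
      atTop (𝓝 (Real.exp (-(a * (1 - d) / d * (1 - Real.exp (-(s * d))))))) ∧
    Tendsto
      (fun n : ℕ =>
        1 - (1 - (1 - (1 - s / n) ^ (d * n)) / (d * n)) ^ (a * (1 - d) * n))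
      atTop (𝓝 (1 - Real.exp (-(a * (1 - d) / d * (1 - Real.exp (-(s * d))))))) := by
  obtain ⟨hd0, hd1⟩ := hd
  obtain ⟨ha0, ha1⟩ := ha
  have hdne : d ≠ 0 := hd0.ne'
  -- inner limit : (1 - s/n)^(d n) → exp (-(s*d))
  have hinner : Tendsto (fun n : ℕ => (1 - s / n) ^ (d * n)) atTop
      (𝓝 (Real.exp (-(s * d)))) := by
    have := aux_pow_limit d (-s) (fun _ => -s) tendsto_const_nhds
      (Eventually.of_forall fun _ => neg_ne_zero.mpr hs.ne')
    have he : Real.exp (d * -s) = Real.exp (-(s * d)) := by ring_nf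
    rw [he] at this
    refine this.congr fun n => ?_
    rw [neg_div, ← sub_eq_add_neg]
  -- define c' n
  set c' : ℕ → ℝ := fun n => -(1 - (1 - s / n) ^ (d * n)) / d with hc'def
  have hc' : Tendsto c' atTop (𝓝 (-(1 - Real.exp (-(s * d))) / d)) := by
    exact (((tendsto_const_nhds.sub hinner).neg).div_const d)
  have hne' : ∀ᶠ n : ℕ in atTop, c' n ≠ 0 := by
    have hlarge : ∀ᶠ n : ℕ in atTop, (s : ℝ) < n :=
      (tendsto_natCast_atTop_atTop (R := ℝ)).eventually_gt_atTop s
    filter_upwards [hlarge, eventually_gt_atTop 0] with n hn hn0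
    have hn0' : (0 : ℝ) < n := lt_of_le_of_lt hs.le hn
    have hb0 : (0 : ℝ) ≤ 1 - s / n := by
      have : s / n < 1 := (div_lt_one hn0').mpr hn
      linarith
    have hb1 : 1 - s / n < 1 := by
      have : 0 < s / n := div_pos hs hn0'
      linarith
    have hexp : 0 < d * n := by positivity
    have hlt : (1 - s / n) ^ (d * n) < 1 :=
      Real.rpow_lt_one hb0 hb1 hexp
    have : 0 < 1 - (1 - s / n) ^ (d * n) := by linarith
    rw [hc'def]
    simp only [ne_eq, div_eq_zero_iff, neg_eq_zero]
    push_neg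
    exact ⟨by linarith, hdne⟩
  have hmain := aux_pow_limit (a * (1 - d)) _ c' hc' hne'
  have key : Tendsto
      (fun n : ℕ =>
        (1 - (1 - (1 - s / n) ^ (d * n)) / (d * n)) ^ (a * (1 - d) * n))
      atTop (𝓝 (Real.exp (-(a * (1 - d) / d * (1 - Real.exp (-(s * d))))))) := by
    have he : Real.exp (a * (1 - d) * (-(1 - Real.exp (-(s * d))) / d)) =
        Real.exp (-(a * (1 - d) / d * (1 - Real.exp (-(s * d))))) := by
      congr 1; ring
    rw [he] at hmain
    refine hmain.congr' ?_
    filter_upwards [eventually_gt_atTop 0] with n hn0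
    have hn0' : (n : ℝ) ≠ 0 := Nat.cast_ne_zero.mpr hn0.ne'
    congr 2
    rw [hc'def]
    field_simp
  exact ⟨key, tendsto_const_nhds.sub key⟩
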